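/- Let 𝒯 be a tree ensemble on ℝ^p, (z^L,z^R) a region, j a feature and l a level with z^L_j ≤ l < z^R_j. (i) If Φ(z^L,z^R_{jl}) ≥ Φ(z^L_{jl},z^R), then for every l′ with l < l′ < z^R_j: 𝟙_{jl}(z^L,z^R) + max{Φ(z^L,z^R_{jl}), Φ(z^L_{jl},z^R)} ≤ 𝟙_{jl′}(z^L,z^R) + max{Φ(z^L,z^R_{jl′}), Φ(z^L_{jl′},z^R)}. (ii) If Φ(z^L,z^R_{jl}) ≤ Φ(z^L_{jl},z^R), then for every l′ with z^L_j ≤ l′ < l: 𝟙_{jl}(z^L,z^R) + max{Φ(z^L,z^R_{jl}), Φ(z^L_{jl},z^R)} ≤ 𝟙_{jl′}(z^L,z^R) + max{Φ(z^L,z^R_{jl′}), Φ(z^L_{jl′},z^R)}. -/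
import Mathlib


/-- A decision tree on `ℝ^p`: either a leaf labeled with a class `c : ℕ`,
or an internal node splitting on feature `j` with threshold `t`. -/
inductive DTree (p : ℕ) : Type where
  | leaf (c : ℕ) : DTree p
  | node (j : Fin p) (t : ℝ) (L R : DTree p) : DTree p

namespace DTree

/-- Evaluation of a decision tree at a point `x : ℝ^p`. -/
noncomputable def eval {p : ℕ} : DTree p → (Fin p → ℝ) → ℕ
  | leaf c, _ => c
  | node j t L R, x => if x j ≤ t then L.eval x else R.eval x

/-- Depth `Φ(T)` of a decision tree. -/
def depth {p : ℕ} : DTree p → ℕ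
  | leaf _ => 0
  | node _ _ L R => 1 + max L.depth R.depth

/-- Number of leaves `L(T)` of a decision tree. -/
def leaves {p : ℕ} : DTree p → ℕ
  | leaf _ => 1
  | node _ _ L R => L.leaves + R.leaves

/-- The set of splits `(j, t)` occurring at internal nodes of a tree. -/
def splits {p : ℕ} : DTree p → Set (Fin p × ℝ)
  | leaf _ => ∅
  | node j t L R => insert (j, t) (L.splits ∪ R.splits)

end DTree

/-- A tree ensemble: a finite nonempty family of decision trees with positive weights. -/
structure Ensemble (p : ℕ) : Type where
  m : ℕ
  m_pos : 0 < m
  tree : Fin m → DTree p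
  weight : Fin m → ℝ
  weight_pos : ∀ i, 0 < weight i

namespace Ensemble

/-- Total weight of the trees voting for class `c` at point `x`. -/
noncomputable def score {p : ℕ} (E : Ensemble p) (x : Fin p → ℝ) (c : ℕ) : ℝ :=
  ∑ i ∈ Finset.univ.filter (fun i => (E.tree i).eval x = c), E.weight i

/-- The decision function of the ensemble: the smallest class maximizing the weighted vote. -/
noncomputable def F {p : ℕ} (E : Ensemble p) (x : Fin p → ℝ) : ℕ :=
  sInf {c : ℕ | ∀ c' : ℕ, E.score x c' ≤ E.score x c}

/-- The set `H j` of thresholds appearing in splits on feature `j` in trees of the ensemble. -/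
def H {p : ℕ} (E : Ensemble p) (j : Fin p) : Set ℝ :=
  {t : ℝ | ∃ i, (j, t) ∈ (E.tree i).splits}

end Ensemble

/-- `T` is faithful to the ensemble `E` on the set `S`. -/
def Faithful {p : ℕ} (T : DTree p) (E : Ensemble p) (S : Set (Fin p → ℝ)) : Prop :=
  ∀ x ∈ S, T.eval x = E.F x
/-- A cell: for each feature `j`, an index in `{0, …, n j}` (0-indexed version of `{1, …, |H_j|+1}`). -/
abbrev Cell {p : ℕ} (n : Fin p → ℕ) : Type := ∀ j, Fin (n j + 1)

/-- The open box `B(z)` associated with a cell `z`, given for each feature `j` the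
increasing enumeration `h j : Fin (n j) → ℝ` of the thresholds: `x j` lies strictly above
every threshold of index `< z j` and strictly below every threshold of index `≥ z j`. -/
def Box {p : ℕ} (n : Fin p → ℕ) (h : ∀ j, Fin (n j) → ℝ) (z : Cell n) : Set (Fin p → ℝ) :=
  {x | ∀ j, (∀ k : Fin (n j), (k : ℕ) < (z j : ℕ) → h j k < x j) ∧
            (∀ k : Fin (n j), (z j : ℕ) ≤ (k : ℕ) → x j < h j k)}

/-- The cell `z` is enclosed in the region `(zL, zR)`. -/
def Encl {p : ℕ} {n : Fin p → ℕ} (zL zR z : Cell n) : Prop :=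
  ∀ j, (zL j : ℕ) ≤ (z j : ℕ) ∧ (z j : ℕ) ≤ (zR j : ℕ)

/-- The subset of `ℝ^p` covered by the region `(zL, zR)`: the union of the boxes of the
cells it encloses. -/
def RegionSet {p : ℕ} (n : Fin p → ℕ) (h : ∀ j, Fin (n j) → ℝ) (zL zR : Cell n) :
    Set (Fin p → ℝ) :=
  ⋃ z ∈ {z : Cell n | Encl zL zR z}, Box n h z

/-- `Φ(zL, zR)`: the minimum depth of a decision tree faithful to `E` on the region `(zL, zR)`. -/
noncomputable def Phi {p : ℕ} (E : Ensemble p) (n : Fin p → ℕ) (h : ∀ j, Fin (n j) → ℝ)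
    (zL zR : Cell n) : ℕ :=
  sInf {d : ℕ | ∃ T : DTree p, Faithful T E (RegionSet n h zL zR) ∧ T.depth = d}

/-- `Λ(zL, zR)`: the minimum number of leaves of a decision tree faithful to `E` on `(zL, zR)`. -/
noncomputable def Lam {p : ℕ} (E : Ensemble p) (n : Fin p → ℕ) (h : ∀ j, Fin (n j) → ℝ)
    (zL zR : Cell n) : ℕ :=
  sInf {d : ℕ | ∃ T : DTree p, Faithful T E (RegionSet n h zL zR) ∧ T.leaves = d}

/-- `z^R_{jl}`: replace the `j`-th coordinate of `zR` by `l`. -/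
def splitR {p : ℕ} {n : Fin p → ℕ} (zR : Cell n) (j : Fin p) (l : Fin (n j)) : Cell n :=
  Function.update zR j l.castSucc

/-- `z^L_{jl}`: replace the `j`-th coordinate of `zL` by `l + 1`. -/
def splitL {p : ℕ} {n : Fin p → ℕ} (zL : Cell n) (j : Fin p) (l : Fin (n j)) : Cell n :=
  Function.update zL j l.succ

/-- The cells `z` and `z'` have the same (weighted majority) class under `E`. -/
def SameClass {p : ℕ} (E : Ensemble p) (n : Fin p → ℕ) (h : ∀ j, Fin (n j) → ℝ)
    (z z' : Cell n) : Prop :=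
  ∀ x ∈ Box n h z, ∀ y ∈ Box n h z', E.F x = E.F y

open Classical in
/-- The indicator `𝟙_{jl}(z^L, z^R)`. -/
noncomputable def ind {p : ℕ} (E : Ensemble p) (n : Fin p → ℕ) (h : ∀ j, Fin (n j) → ℝ)
    (zL zR : Cell n) (j : Fin p) (l : Fin (n j)) : ℕ :=
  if Phi E n h zL (splitR zR j l) = 0 ∧ Phi E n h (splitL zL j l) zR = 0 ∧ SameClass E n h zL zR
  then 0 else 1

section Aux

variable {p : ℕ}

/-- A tree whose splits all use grid thresholds evaluates constantly on each box. -/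
lemma eval_const_on_box {n : Fin p → ℕ} (h : ∀ j, Fin (n j) → ℝ)
    (T : DTree p) (z : Cell n) {x y : Fin p → ℝ} (hx : x ∈ Box n h z) (hy : y ∈ Box n h z) :
    (∀ j : Fin p, ∀ t : ℝ, (j, t) ∈ T.splits → ∃ k : Fin (n j), t = h j k) →
    T.eval x = T.eval y := by
  induction T with
  | leaf c => intro _; rfl
  | node j t L R ihL ihR =>
    intro hT
    obtain ⟨k, rfl⟩ := hT j t (by simp [DTree.splits])
    have key : ∀ w : Fin p → ℝ, w ∈ Box n h z → (w j ≤ h j k ↔ (z j : ℕ) ≤ (k : ℕ)) := by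
      intro w hw
      obtain ⟨h1, h2⟩ := hw j
      constructor
      · intro hle
        by_contra hlt
        exact absurd hle (not_le.2 (h1 k (lt_of_not_ge hlt)))
      · intro hk
        exact (h2 k hk).le
    have hL' : ∀ j' t', (j', t') ∈ L.splits → ∃ k', t' = h j' k' := fun j' t' ht' =>
      hT j' t' (by simp [DTree.splits, ht'])
    have hR' : ∀ j' t', (j', t') ∈ R.splits → ∃ k', t' = h j' k' := fun j' t' ht' =>
      hT j' t' (by simp [DTree.splits, ht'])
    simp only [DTree.eval]
    by_cases hc : (z j : ℕ) ≤ (k : ℕ)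
    · rw [if_pos ((key x hx).2 hc), if_pos ((key y hy).2 hc)]
      exact ihL hL'
    · rw [if_neg (fun hh => hc ((key x hx).1 hh)), if_neg (fun hh => hc ((key y hy).1 hh))]
      exact ihR hR'

/-- The ensemble decision function is constant on each box. -/
lemma F_const_on_box (E : Ensemble p) {n : Fin p → ℕ} {h : ∀ j, Fin (n j) → ℝ}
    (hcov : ∀ j, E.H j = Set.range (h j)) (z : Cell n) {x y : Fin p → ℝ}
    (hx : x ∈ Box n h z) (hy : y ∈ Box n h z) : E.F x = E.F y := by
  have hev : ∀ i, (E.tree i).eval x = (E.tree i).eval y := by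
    intro i
    refine eval_const_on_box h _ z hx hy ?_
    intro j t ht
    have hmem : t ∈ E.H j := ⟨i, ht⟩
    rw [hcov j] at hmem
    obtain ⟨k, hk⟩ := hmem
    exact ⟨k, hk.symm⟩
  have hsc : ∀ c, E.score x c = E.score y c := by
    intro c
    unfold Ensemble.score
    congr 1
    ext i
    simp [hev i]
  unfold Ensemble.F
  simp only [hsc]

/-- A chain of splits on feature `j` at thresholds `t 0, …, t (k-1)`. -/
def chain (j : Fin p) : (k : ℕ) → (Fin k → ℝ) → (Fin (k + 1) → DTree p) → DTree p
  | 0, _, f => f 0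
  | k + 1, t, f => DTree.node j (t 0) (f 0) (chain j k (fun i => t i.succ) (fun i => f i.succ))

lemma chain_eval (j : Fin p) (x : Fin p → ℝ) :
    ∀ (k : ℕ) (t : Fin k → ℝ) (f : Fin (k + 1) → DTree p) (m : Fin (k + 1)),
      (∀ i : Fin k, (i : ℕ) < (m : ℕ) → t i < x j) →
      (∀ i : Fin k, (m : ℕ) ≤ (i : ℕ) → x j < t i) →
      (chain j k t f).eval x = (f m).eval x
  | 0, t, f, m, _, _ => by
      have hm : m = 0 := Fin.ext (Nat.lt_one_iff.mp m.isLt)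
      rw [hm]; rfl
  | k + 1, t, f, m, h1, h2 => by
      simp only [chain, DTree.eval]
      by_cases hx0 : x j ≤ t 0
      · have hm : m = 0 := by
          by_contra hm
          have hpos : (0 : ℕ) < (m : ℕ) := Nat.pos_of_ne_zero (fun hz => hm (Fin.ext hz))
          exact absurd hx0 (not_le.2 (h1 0 hpos))
        rw [if_pos hx0, hm]
      · rw [if_neg hx0]
        have hm0 : m ≠ 0 := by
          intro hz
          exact hx0 (le_of_lt (h2 0 (by rw [hz]; exact le_refl 0)))
        obtain ⟨m', rfl⟩ : ∃ m' : Fin (k + 1), m = m'.succ :=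
          ⟨m.pred hm0, (Fin.succ_pred m hm0).symm⟩
        exact chain_eval j x k (fun i => t i.succ) (fun i => f i.succ) m'
          (fun i hi => h1 i.succ (by simpa using hi))
          (fun i hi => h2 i.succ (by simpa using hi))

/-- A tree that, on the listed features, identifies the cell of the argument. -/
def build (n : Fin p → ℕ) (h : ∀ j, Fin (n j) → ℝ) (g : Cell n → ℕ) :
    List (Fin p) → Cell n → DTree p
  | [], z => DTree.leaf (g z)
  | j :: L, z => chain j (n j) (h j) (fun m => build n h g L (Function.update z j m))

lemma build_eval {n : Fin p → ℕ} {h : ∀ j, Fin (n j) → ℝ} (g : Cell n → ℕ)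
    (x : Fin p → ℝ) (zx : Cell n) (hx : x ∈ Box n h zx) :
    ∀ (L : List (Fin p)) (z : Cell n), (∀ j, j ∉ L → z j = zx j) →
      (build n h g L z).eval x = g zx
  | [], z, hz => by
      have hzz : z = zx := funext fun j => hz j (by simp)
      rw [hzz]; rfl
  | j :: L, z, hz => by
      simp only [build]
      obtain ⟨h1, h2⟩ := hx j
      rw [chain_eval j x (n j) (h j) _ (zx j) h1 h2]
      refine build_eval g x zx hx L (Function.update z j (zx j)) ?_
      intro j' hj'
      rcases eq_or_ne j' j with rfl | hne
      · simp
      · rw [Function.update_of_ne hne]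
        exact hz j' (by simp [hj', hne])

open Classical in
/-- The class of (a representative point of) the box of a cell. -/
noncomputable def gfun (E : Ensemble p) (n : Fin p → ℕ) (h : ∀ j, Fin (n j) → ℝ) :
    Cell n → ℕ :=
  fun z => if hz : (Box n h z).Nonempty then E.F hz.choose else 0

lemma exists_faithful (E : Ensemble p) {n : Fin p → ℕ} {h : ∀ j, Fin (n j) → ℝ}
    (hcov : ∀ j, E.H j = Set.range (h j)) (zL zR : Cell n) :
    ∃ T : DTree p, Faithful T E (RegionSet n h zL zR) := by
  classical
  refine ⟨build n h (gfun E n h) (List.finRange p) (fun _ => 0), ?_⟩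
  intro x hx
  simp only [RegionSet, Set.mem_iUnion, Set.mem_setOf_eq] at hx
  obtain ⟨z, _, hxz⟩ := hx
  rw [build_eval (gfun E n h) x z hxz (List.finRange p) _
    (fun j hj => absurd (List.mem_finRange j) hj)]
  unfold gfun
  rw [dif_pos ⟨x, hxz⟩]
  exact F_const_on_box E hcov z (Set.Nonempty.some_mem ⟨x, hxz⟩) hxz

lemma Phi_mono (E : Ensemble p) {n : Fin p → ℕ} {h : ∀ j, Fin (n j) → ℝ}
    (hcov : ∀ j, E.H j = Set.range (h j)) {zL zR zL' zR' : Cell n}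
    (hsub : RegionSet n h zL' zR' ⊆ RegionSet n h zL zR) :
    Phi E n h zL' zR' ≤ Phi E n h zL zR := by
  obtain ⟨T0, hT0⟩ := exists_faithful E hcov zL zR
  have hne : {d : ℕ | ∃ T : DTree p, Faithful T E (RegionSet n h zL zR) ∧ T.depth = d}.Nonempty :=
    ⟨T0.depth, T0, hT0, rfl⟩
  obtain ⟨T, hT, hd⟩ := Nat.sInf_mem hne
  exact Nat.sInf_le ⟨T, fun x hx => hT x (hsub hx), hd⟩

lemma RegionSet_mono {n : Fin p → ℕ} (h : ∀ j, Fin (n j) → ℝ) {zL zR zL' zR' : Cell n}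
    (hL : ∀ j, (zL j : ℕ) ≤ (zL' j : ℕ)) (hR : ∀ j, (zR' j : ℕ) ≤ (zR j : ℕ)) :
    RegionSet n h zL' zR' ⊆ RegionSet n h zL zR := by
  intro x hx
  simp only [RegionSet, Set.mem_iUnion, Set.mem_setOf_eq] at hx ⊢
  obtain ⟨z, hz, hxz⟩ := hx
  exact ⟨z, fun j => ⟨le_trans (hL j) (hz j).1, le_trans (hz j).2 (hR j)⟩, hxz⟩

end Aux

/-- **Theorem 4.** (i) If `Φ(zL, zR_{jl}) ≥ Φ(zL_{jl}, zR)` then for every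
level `l' > l` the split value at `l` is no worse than at `l'`. (ii) Symmetrically, if
`Φ(zL, zR_{jl}) ≤ Φ(zL_{jl}, zR)` then the same holds for every level `l' < l`. -/
theorem binary_search_dominance {p : ℕ} (E : Ensemble p) (n : Fin p → ℕ)
    (h : ∀ j, Fin (n j) → ℝ)
    (hmono : ∀ j, StrictMono (h j)) (hcov : ∀ j, E.H j = Set.range (h j))
    (zL zR : Cell n) (hreg : ∀ j, (zL j : ℕ) ≤ (zR j : ℕ))
    (j : Fin p) (l : Fin (n j)) (hl1 : (zL j : ℕ) ≤ (l : ℕ)) (hl2 : (l : ℕ) < (zR j : ℕ)) :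
    (Phi E n h (splitL zL j l) zR ≤ Phi E n h zL (splitR zR j l) →
      ∀ l' : Fin (n j), (l : ℕ) < (l' : ℕ) → (l' : ℕ) < (zR j : ℕ) →
        ind E n h zL zR j l +
            max (Phi E n h zL (splitR zR j l)) (Phi E n h (splitL zL j l) zR) ≤
          ind E n h zL zR j l' +
            max (Phi E n h zL (splitR zR j l')) (Phi E n h (splitL zL j l') zR)) ∧
    (Phi E n h zL (splitR zR j l) ≤ Phi E n h (splitL zL j l) zR →
      ∀ l' : Fin (n j), (zL j : ℕ) ≤ (l' : ℕ) → (l' : ℕ) < (l : ℕ) →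
        ind E n h zL zR j l +
            max (Phi E n h zL (splitR zR j l)) (Phi E n h (splitL zL j l) zR) ≤
          ind E n h zL zR j l' +
            max (Phi E n h zL (splitR zR j l')) (Phi E n h (splitL zL j l') zR)) := by
  
  classical
  set A := fun l0 : Fin (n j) => Phi E n h zL (splitR zR j l0) with hA
  set B := fun l0 : Fin (n j) => Phi E n h (splitL zL j l0) zR with hB
  have hAmono : ∀ l1 l2 : Fin (n j), (l1 : ℕ) ≤ (l2 : ℕ) → A l1 ≤ A l2 := by
    intro l1 l2 h12
    refine Phi_mono E hcov (RegionSet_mono h (fun _ => le_refl _) ?_)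
    intro j'
    rcases eq_or_ne j' j with rfl | hne
    · simp only [splitR, Function.update_self, Fin.coe_castSucc]
      exact h12
    · simp [splitR, Function.update_of_ne hne]
  have hBanti : ∀ l1 l2 : Fin (n j), (l1 : ℕ) ≤ (l2 : ℕ) → B l2 ≤ B l1 := by
    intro l1 l2 h12
    refine Phi_mono E hcov (RegionSet_mono h ?_ (fun _ => le_refl _))
    intro j'
    rcases eq_or_ne j' j with rfl | hne
    · simp only [splitL, Function.update_self, Fin.val_succ]
      exact Nat.succ_le_succ h12
    · simp [splitL, Function.update_of_ne hne]
  constructor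
  · intro hBA l' hll' _
    have hAl : A l ≤ A l' := hAmono l l' (le_of_lt hll')
    have hind : ind E n h zL zR j l ≤ ind E n h zL zR j l' := by
      unfold ind
      by_cases hc : Phi E n h zL (splitR zR j l') = 0 ∧ Phi E n h (splitL zL j l') zR = 0 ∧
          SameClass E n h zL zR
      · have hA0 : A l = 0 := Nat.le_zero.mp (hc.1 ▸ hAl)
        have hB0 : B l = 0 := Nat.le_zero.mp (hA0 ▸ hBA)
        rw [if_pos ⟨hA0, hB0, hc.2.2⟩, if_pos hc]
      · rw [if_neg hc]
        split <;> simp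
    have hmax : max (A l) (B l) ≤ max (A l') (B l') :=
      le_trans (by rw [max_eq_left hBA]; exact hAl) (le_max_left _ _)
    exact add_le_add hind hmax
  · intro hAB l' _ hl'l
    have hBl : B l ≤ B l' := hBanti l' l (le_of_lt hl'l)
    have hind : ind E n h zL zR j l ≤ ind E n h zL zR j l' := by
      unfold ind
      by_cases hc : Phi E n h zL (splitR zR j l') = 0 ∧ Phi E n h (splitL zL j l') zR = 0 ∧
          SameClass E n h zL zR
      · have hB0 : B l = 0 := Nat.le_zero.mp (hc.2.1 ▸ hBl)
        have hA0 : A l = 0 := Nat.le_zero.mp (hB0 ▸ hAB)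
        rw [if_pos ⟨hA0, hB0, hc.2.2⟩, if_pos hc]
      · rw [if_neg hc]
        split <;> simp
    have hmax : max (A l) (B l) ≤ max (A l') (B l') :=
      le_trans (by rw [max_eq_right hAB]; exact hBl) (le_max_right _ _)
    exact add_le_add hind hmax
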